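/- Negative dependence of two interacting partial exclusion particles: for every t ≥ 0, every f : V → ℝ, and every (x,y) ∈ V×V, (exp(tA^{(2)})(f⊗f))(x,y) ≤ (exp(tA)f)(x) · (exp(tA)f)(y), where exp(tA^{(2)}) and exp(tA) denote the matrix exponentials of A^{(2)} (viewed as a matrix indexed by V×V) and of A (viewed as a matrix indexed by V). -/

import Mathlib

open scoped BigOperators

/-- Configuration space: at most `α x` particles at each site `x`. -/
abbrev Conf {V : Type*} (α : V → ℕ) : Type _ := ∀ x : V, Fin (α x + 1)

/-- The configuration `η` with one particle moved from `x` to `y`. -/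
def move {V : Type*} [DecidableEq V] (α : V → ℕ) (η : Conf α) (x y : V) : Conf α :=
  Function.update
    (Function.update η x ⟨(η x : ℕ) - 1, by have := (η x).isLt; omega⟩)
    y ⟨min ((η y : ℕ) + 1) (α y), by
      have := Nat.min_le_right ((η y : ℕ) + 1) (α y); omega⟩

/-- Jump rate of the partial exclusion process of interacting BTM(a):
rate for moving a particle from `x` to `y`.  It vanishes if `η x = 0` or
`η y = α y`, so `move` is only effectively used where it is well defined. -/
noncomputable def jumpRate {V : Type*} (α : V → ℕ) (a : ℝ) (η : Conf α) (x y : V) : ℝ :=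
  ((η x : ℕ) : ℝ) * (α x : ℝ) ^ (a - 1) * (α y : ℝ) ^ a *
    (1 - ((η y : ℕ) : ℝ) / (α y : ℝ))

/-- The partial exclusion generator `L` in environment `α`. -/
noncomputable def gen {V : Type*} [Fintype V] [DecidableEq V] (α : V → ℕ) (a : ℝ)
    (adj : V → V → Prop) [DecidableRel adj] (φ : Conf α → ℝ) (η : Conf α) : ℝ :=
  ∑ x : V, ∑ y : V,
    if adj x y then jumpRate α a η x y * (φ (move α η x y) - φ η) else 0

/-- The single-particle (Bouchaud trap model) generator `A`. -/
noncomputable def sgen {V : Type*} [Fintype V] (α : V → ℕ) (a : ℝ)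
    (adj : V → V → Prop) [DecidableRel adj] (g : V → ℝ) (x : V) : ℝ :=
  (α x : ℝ) ^ (a - 1) * ∑ y : V, if adj x y then (α y : ℝ) ^ a * (g y - g x) else 0

/-- The two-particle generator `A^{(2)}` of two interacting BTM(a) particles. -/
noncomputable def gen2 {V : Type*} [Fintype V] [DecidableEq V] (α : V → ℕ) (a : ℝ)
    (adj : V → V → Prop) [DecidableRel adj] (h : V → V → ℝ) (z w : V) : ℝ :=
  (α z : ℝ) ^ (a - 1) *
      (∑ u : V, if adj z u then
        (α u : ℝ) ^ a * (1 - (if u = w then 1 else 0) / (α u : ℝ)) * (h u w - h z w)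
      else 0)
    + (α w : ℝ) ^ (a - 1) *
      (∑ u : V, if adj w u then
        (α u : ℝ) ^ a * (1 - (if u = z then 1 else 0) / (α u : ℝ)) * (h z u - h z w)
      else 0)

/-! ### Auxiliary material for the proof -/

open NormedSpace

section MatrixExpAux

/-- Entry evaluation as a linear map. -/
private def entryLM {n : Type*} (i j : n) : Matrix n n ℝ →ₗ[ℝ] ℝ where
  toFun M := M i j
  map_add' _ _ := rfl
  map_smul' _ _ := rfl

private lemma matrix_pow_entry_nonneg {n : Type*} [Fintype n] [DecidableEq n] {P : Matrix n n ℝ}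
    (hP : ∀ i j, 0 ≤ P i j) : ∀ (k : ℕ) (i j : n), 0 ≤ (P ^ k) i j := by
  intro k
  induction k with
  | zero =>
    intro i j
    simp only [pow_zero, Matrix.one_apply]
    split <;> norm_num
  | succ k ih =>
    intro i j
    rw [pow_succ, Matrix.mul_apply]
    exact Finset.sum_nonneg fun l _ => mul_nonneg (ih i l) (hP l j)

private lemma exp_entry_nonneg_of_nonneg {n : Type*} [Fintype n] [DecidableEq n]
    {P : Matrix n n ℝ} (hP : ∀ i j, 0 ≤ P i j) (i j : n) : 0 ≤ exp P i j := by
  letI : SeminormedRing (Matrix n n ℝ) := Matrix.linftyOpSemiNormedRing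
  letI : NormedRing (Matrix n n ℝ) := Matrix.linftyOpNormedRing
  letI : NormedAlgebra ℝ (Matrix n n ℝ) := Matrix.linftyOpNormedAlgebra
  have hsum : HasSum (fun k : ℕ => ((Nat.factorial k : ℝ)⁻¹) • P ^ k) (exp P) := by
    rw [exp_eq_tsum ℝ]
    exact (expSeries_summable' (𝕂 := ℝ) P).hasSum
  have h2 : HasSum (fun k : ℕ => ((Nat.factorial k : ℝ)⁻¹) * (P ^ k) i j) (exp P i j) := by
    have := (LinearMap.toContinuousLinearMap (entryLM i j)).hasSum hsum
    exact this
  refine hasSum_le (fun k => ?_) hasSum_zero h2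
  exact mul_nonneg (by positivity) (matrix_pow_entry_nonneg hP k i j)

private lemma exp_entry_nonneg {n : Type*} [Fintype n] [DecidableEq n]
    (M : Matrix n n ℝ) (hM : ∀ i j, i ≠ j → 0 ≤ M i j) {s : ℝ} (hs : 0 ≤ s)
    (i j : n) : 0 ≤ exp (s • M) i j := by
  letI : SeminormedRing (Matrix n n ℝ) := Matrix.linftyOpSemiNormedRing
  letI : NormedRing (Matrix n n ℝ) := Matrix.linftyOpNormedRing
  letI : NormedAlgebra ℝ (Matrix n n ℝ) := Matrix.linftyOpNormedAlgebra
  classical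
  set c : ℝ := ∑ k : n, |M k k| with hc
  have hc0 : 0 ≤ c := Finset.sum_nonneg fun k _ => abs_nonneg _
  have hdiag : ∀ k, 0 ≤ M k k + c := by
    intro k
    have h1 : |M k k| ≤ c := Finset.single_le_sum (fun l _ => abs_nonneg (M l l))
      (Finset.mem_univ k)
    have := neg_abs_le (M k k)
    linarith
  set N : Matrix n n ℝ := M + c • (1 : Matrix n n ℝ) with hN
  have hNpos : ∀ i j, 0 ≤ N i j := by
    intro i j
    by_cases hij : i = j
    · subst hij
      simp only [hN, Matrix.add_apply, Matrix.smul_apply, Matrix.one_apply_eq, smul_eq_mul,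
        mul_one]
      exact hdiag i
    · simp only [hN, Matrix.add_apply, Matrix.smul_apply, Matrix.one_apply_ne hij, smul_eq_mul,
        mul_zero, add_zero]
      exact hM i j hij
  have hsN : ∀ i j, 0 ≤ (s • N) i j := fun i j => mul_nonneg hs (hNpos i j)
  have hcomm : Commute (s • M) ((s * c) • (1 : Matrix n n ℝ)) :=
    (Commute.one_right (s • M)).smul_right _
  have hsplit : s • N = s • M + (s * c) • (1 : Matrix n n ℝ) := by
    rw [hN, smul_add, smul_smul]
  have hexpsplit : exp (s • N) = exp (s • M) * exp ((s * c) • (1 : Matrix n n ℝ)) := by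
    rw [hsplit]
    exact Matrix.exp_add_of_commute _ _ hcomm
  have hexp1 : exp ((s * c) • (1 : Matrix n n ℝ)) = Real.exp (s * c) • (1 : Matrix n n ℝ) := by
    have h1 : (s * c) • (1 : Matrix n n ℝ) = algebraMap ℝ (Matrix n n ℝ) (s * c) := by
      rw [Algebra.algebraMap_eq_smul_one]
    rw [h1]
    erw [← algebraMap_exp_comm (𝕂 := ℝ) (𝔸 := Matrix n n ℝ)]
    rw [Algebra.algebraMap_eq_smul_one, Real.exp_eq_exp_ℝ]
  have key : exp (s • N) i j = Real.exp (s * c) * exp (s • M) i j := by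
    rw [hexpsplit, hexp1, mul_smul_comm, mul_one, Matrix.smul_apply, smul_eq_mul]
  have hpos := exp_entry_nonneg_of_nonneg hsN i j
  rw [key] at hpos
  have := Real.exp_pos (s * c)
  nlinarith

private lemma hasDerivAt_exp_entry {n : Type*} [Fintype n] [DecidableEq n]
    (M : Matrix n n ℝ) (i j : n) (s : ℝ) :
    HasDerivAt (fun u : ℝ => exp (u • M) i j) ((exp (s • M) * M) i j) s := by
  letI : SeminormedRing (Matrix n n ℝ) := Matrix.linftyOpSemiNormedRing
  letI : NormedRing (Matrix n n ℝ) := Matrix.linftyOpNormedRing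
  letI : NormedAlgebra ℝ (Matrix n n ℝ) := Matrix.linftyOpNormedAlgebra
  have h := hasDerivAt_exp_smul_const (𝕂 := ℝ) M s
  have hL := (LinearMap.toContinuousLinearMap (entryLM i j)).hasFDerivAt.comp_hasDerivAt s h
  exact hL

end MatrixExpAux

section GenAux

variable {V : Type*} [Fintype V] [DecidableEq V]

/-- Splitting off the exclusion correction from one coordinate sum. -/
private lemma sum_split (α : V → ℕ) (a : ℝ)
    (adj : V → V → Prop) [DecidableRel adj] (hα : ∀ x, 1 ≤ α x)
    (g : V → ℝ) (z w : V) (c : ℝ) :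
    (∑ u : V, if adj z u then
        (α u : ℝ) ^ a * (1 - (if u = w then 1 else 0) / (α u : ℝ)) * (g u * c - g z * c)
      else 0)
    = (∑ u : V, if adj z u then (α u : ℝ) ^ a * (g u - g z) else 0) * c
      - (if adj z w then (α w : ℝ) ^ (a - 1) * ((g w - g z) * c) else 0) := by
  classical
  have hterm : ∀ u : V,
      (if adj z u then
        (α u : ℝ) ^ a * (1 - (if u = w then 1 else 0) / (α u : ℝ)) * (g u * c - g z * c)
      else 0)
      = (if adj z u then (α u : ℝ) ^ a * (g u - g z) else 0) * c
        - (if u = w then (if adj z w then (α w : ℝ) ^ (a - 1) * ((g w - g z) * c) else 0)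
          else 0) := by
    intro u
    by_cases huw : u = w
    · subst huw
      by_cases hadj : adj z u
      · simp only [hadj, if_true, if_pos rfl]
        have hαu : (0 : ℝ) < (α u : ℝ) := by
          exact_mod_cast Nat.lt_of_lt_of_le Nat.zero_lt_one (hα u)
        have h1 : (α u : ℝ) ^ (a - 1) = (α u : ℝ) ^ a / (α u : ℝ) := by
          rw [Real.rpow_sub hαu, Real.rpow_one]
        rw [h1]
        field_simp
      · simp [hadj]
    · by_cases hadj : adj z u
      · simp only [hadj, if_true, huw, if_false, if_neg huw]
        ring
      · simp [hadj, huw]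
  rw [Finset.sum_congr rfl fun u _ => hterm u, Finset.sum_sub_distrib, ← Finset.sum_mul,
    Finset.sum_ite_eq' Finset.univ w]
  simp

/-- The key algebraic identity: applying the two-particle generator to a product
function produces the independent evolution plus a nonpositive correction. -/
private lemma gen2_tensor (adj : V → V → Prop) [DecidableRel adj]
    (hsym : ∀ x y, adj x y → adj y x) (a : ℝ)
    (α : V → ℕ) (hα : ∀ x, 1 ≤ α x) (g : V → ℝ) (z w : V) :
    gen2 α a adj (fun z w => g z * g w) z w
      = sgen α a adj g z * g w + g z * sgen α a adj g w
        - (if adj z w then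
            (α z : ℝ) ^ (a - 1) * (α w : ℝ) ^ (a - 1) * (g z - g w) ^ 2 else 0) := by
  classical
  unfold gen2 sgen
  rw [sum_split α a adj hα g z w (g w)]
  have h2 : (∑ u : V, if adj w u then
        (α u : ℝ) ^ a * (1 - (if u = z then 1 else 0) / (α u : ℝ)) *
          (g z * g u - g z * g w) else 0)
      = (∑ u : V, if adj w u then (α u : ℝ) ^ a * (g u - g w) else 0) * g z
        - (if adj w z then (α z : ℝ) ^ (a - 1) * ((g z - g w) * g z) else 0) := by
    rw [← sum_split α a adj hα g w z (g z)]
    refine Finset.sum_congr rfl fun u _ => ?_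
    by_cases hadj : adj w u
    · simp only [hadj, if_true]; ring
    · simp [hadj]
  rw [h2]
  have hadj_iff : adj w z ↔ adj z w := ⟨hsym w z, hsym z w⟩
  by_cases hadj : adj z w
  · simp only [hadj, if_true, if_pos (hadj_iff.mpr hadj)]
    ring
  · simp only [hadj, if_false, if_neg (fun h => hadj (hadj_iff.mp h))]
    ring

/-- The two-particle generator is nonnegative on nonnegative functions vanishing at the
evaluation point. -/
private lemma gen2_nonneg (adj : V → V → Prop) [DecidableRel adj] (a : ℝ)
    (α : V → ℕ) (hα : ∀ x, 1 ≤ α x) (h : V → V → ℝ) (z w : V)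
    (hh : ∀ u v, 0 ≤ h u v) (hzw : h z w = 0) : 0 ≤ gen2 α a adj h z w := by
  classical
  have hcoef : ∀ u v : V, (0:ℝ) ≤ 1 - (if u = v then (1:ℝ) else 0) / (α u : ℝ) := by
    intro u v
    have hαu : (1 : ℝ) ≤ (α u : ℝ) := by exact_mod_cast hα u
    have hpos : (0:ℝ) < (α u : ℝ) := by linarith
    by_cases huv : u = v
    · simp only [huv, if_true]
      have h1 : (1 : ℝ) / (α u : ℝ) ≤ 1 := (div_le_one hpos).mpr hαu
      rw [huv] at h1
      linarith
    · simp [huv]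
  unfold gen2
  rw [hzw]
  have hterm : ∀ (p q : V) (useq : V → Prop) [DecidablePred useq] (hv : ∀ u, 0 ≤ h u q ∨ True),
      True := fun _ _ _ _ _ => trivial
  refine add_nonneg (mul_nonneg (Real.rpow_nonneg (Nat.cast_nonneg _) _) ?_)
    (mul_nonneg (Real.rpow_nonneg (Nat.cast_nonneg _) _) ?_)
  · refine Finset.sum_nonneg fun u _ => ?_
    by_cases hadj : adj z u
    · simp only [hadj, if_true, sub_zero]
      exact mul_nonneg (mul_nonneg (Real.rpow_nonneg (Nat.cast_nonneg _) _) (hcoef u w))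
        (hh u w)
    · simp [hadj]
  · refine Finset.sum_nonneg fun u _ => ?_
    by_cases hadj : adj w u
    · simp only [hadj, if_true, sub_zero]
      exact mul_nonneg (mul_nonneg (Real.rpow_nonneg (Nat.cast_nonneg _) _) (hcoef u z))
        (hh z u)
    · simp [hadj]

end GenAux

section DerivAux

variable {V : Type*} [Fintype V] [DecidableEq V]

/-- The single-particle semigroup applied to `f`, time-reversed at horizon `t`. -/
private noncomputable def uu (MA : Matrix V V ℝ) (f : V → ℝ) (t s : ℝ) (v : V) : ℝ :=
  ∑ w : V, exp ((t - s) • MA) v w * f w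

/-- Derivative (in `s`) of `uu`. -/
private noncomputable def duu (MA : Matrix V V ℝ) (f : V → ℝ) (t s : ℝ) (v : V) : ℝ :=
  -∑ w : V, (exp ((t - s) • MA) * MA) v w * f w

/-- The interpolation function. -/
private noncomputable def FF (MA : Matrix V V ℝ) (MA2 : Matrix (V × V) (V × V) ℝ)
    (f : V → ℝ) (t : ℝ) (x y : V) (s : ℝ) : ℝ :=
  ∑ q : V × V, exp (s • MA2) (x, y) q * (uu MA f t s q.1 * uu MA f t s q.2)

/-- Derivative of the interpolation function. -/
private noncomputable def FF' (MA : Matrix V V ℝ) (MA2 : Matrix (V × V) (V × V) ℝ)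
    (f : V → ℝ) (t : ℝ) (x y : V) (s : ℝ) : ℝ :=
  ∑ q : V × V,
    ((exp (s • MA2) * MA2) (x, y) q * (uu MA f t s q.1 * uu MA f t s q.2)
      + exp (s • MA2) (x, y) q *
        (duu MA f t s q.1 * uu MA f t s q.2 + uu MA f t s q.1 * duu MA f t s q.2))

private lemma hasDerivAt_uu (MA : Matrix V V ℝ) (f : V → ℝ) (t : ℝ) (v : V) (s : ℝ) :
    HasDerivAt (fun s => uu MA f t s v) (duu MA f t s v) s := by
  have key : ∀ w : V, HasDerivAt (fun s : ℝ => exp ((t - s) • MA) v w * f w)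
      (-((exp ((t - s) • MA) * MA) v w * f w)) s := by
    intro w
    have h1 : HasDerivAt (fun s : ℝ => t - s) (-1 : ℝ) s := by
      simpa using (hasDerivAt_id s).const_sub t
    have h2 := (hasDerivAt_exp_entry MA v w (t - s)).comp s h1
    have h3 := h2.mul_const (f w)
    convert h3 using 1
    · rfl
    · rfl
    · rfl
    · ring
  have h4 := HasDerivAt.fun_sum (fun w (_ : w ∈ (Finset.univ : Finset V)) => key w)
  have heq : duu MA f t s v = ∑ w : V, -((exp ((t - s) • MA) * MA) v w * f w) := by
    simp [duu]
  rw [show (fun s => uu MA f t s v) = fun s => ∑ w : V, exp ((t - s) • MA) v w * f w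
    from rfl, heq]
  exact h4

private lemma hasDerivAt_FF (MA : Matrix V V ℝ) (MA2 : Matrix (V × V) (V × V) ℝ)
    (f : V → ℝ) (t : ℝ) (x y : V) (s : ℝ) :
    HasDerivAt (FF MA MA2 f t x y) (FF' MA MA2 f t x y s) s := by
  have : HasDerivAt (fun s => ∑ q : V × V,
      exp (s • MA2) (x, y) q * (uu MA f t s q.1 * uu MA f t s q.2))
      (FF' MA MA2 f t x y s) s := by
    unfold FF'
    refine HasDerivAt.fun_sum fun q _ => ?_
    exact (hasDerivAt_exp_entry MA2 (x, y) q s).mul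
      ((hasDerivAt_uu MA f t q.1 s).mul (hasDerivAt_uu MA f t q.2 s))
  exact this

end DerivAux

/-- negative dependence of two interacting partial exclusion
particles at the level of semigroups.  `MA` is the single-particle generator
`A` viewed as a matrix indexed by `V`, and `MA2` is the two-particle
generator `A^{(2)}` viewed as a matrix indexed by `V × V`. -/
theorem negative_dependence {V : Type*} [Fintype V] [DecidableEq V]
    (adj : V → V → Prop) [DecidableRel adj]
    (hsym : ∀ x y, adj x y → adj y x) (hirr : ∀ x, ¬ adj x x)
    (a : ℝ) (ha0 : 0 ≤ a) (ha1 : a ≤ 1)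
    (α : V → ℕ) (hα : ∀ x, 1 ≤ α x)
    (MA : Matrix V V ℝ)
    (hMA : ∀ (g : V → ℝ) (x : V), ∑ y : V, MA x y * g y = sgen α a adj g x)
    (MA2 : Matrix (V × V) (V × V) ℝ)
    (hMA2 : ∀ (h : V × V → ℝ) (p : V × V),
      ∑ q : V × V, MA2 p q * h q = gen2 α a adj (fun z w => h (z, w)) p.1 p.2)
    (t : ℝ) (ht : 0 ≤ t) (f : V → ℝ) (x y : V) :
    ∑ q : V × V, NormedSpace.exp (t • MA2) (x, y) q * (f q.1 * f q.2)
      ≤ (∑ u : V, NormedSpace.exp (t • MA) x u * f u) *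
        (∑ u : V, NormedSpace.exp (t • MA) y u * f u) := by
  classical
  -- off-diagonal entries of MA2 are nonnegative
  have hMA2entry : ∀ p q : V × V,
      MA2 p q = gen2 α a adj (fun z w => if (z, w) = q then 1 else 0) p.1 p.2 := by
    intro p q
    have h := hMA2 (fun r => if r = q then (1 : ℝ) else 0) p
    rw [← h]
    simp [mul_ite, mul_one, mul_zero]
  have hMA2offdiag : ∀ p q : V × V, p ≠ q → 0 ≤ MA2 p q := by
    intro p q hpq
    rw [hMA2entry p q]
    refine gen2_nonneg adj a α hα _ p.1 p.2 (fun u v => ?_) ?_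
    · split <;> norm_num
    · simp only [Prod.mk.eta]
      rw [if_neg hpq]
  -- commutation of MA with its semigroup
  have hcommMA : ∀ r : ℝ, NormedSpace.exp (r • MA) * MA = MA * NormedSpace.exp (r • MA) :=
    fun r => (((Commute.refl MA).smul_right r).exp_right).eq.symm
  -- the derivative of uu is minus the generator applied to uu
  have hduu : ∀ (s : ℝ) (v : V),
      duu MA f t s v = -sgen α a adj (fun k => uu MA f t s k) v := by
    intro s v
    unfold duu uu
    congr 1
    rw [hcommMA (t - s)]
    calc ∑ w : V, (MA * NormedSpace.exp ((t - s) • MA)) v w * f w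
        = ∑ w : V, ∑ k : V, MA v k * NormedSpace.exp ((t - s) • MA) k w * f w := by
          simp [Matrix.mul_apply, Finset.sum_mul]
      _ = ∑ k : V, MA v k * ∑ w : V, NormedSpace.exp ((t - s) • MA) k w * f w := by
          rw [Finset.sum_comm]
          simp [Finset.mul_sum, mul_assoc]
      _ = sgen α a adj (fun k => ∑ w : V, NormedSpace.exp ((t - s) • MA) k w * f w) v :=
          hMA _ v
  -- rewriting of the MA2 part of the derivative
  have hmulMA2 : ∀ (s : ℝ),
      ∑ q : V × V, (NormedSpace.exp (s • MA2) * MA2) (x, y) q *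
          (uu MA f t s q.1 * uu MA f t s q.2)
        = ∑ q : V × V, NormedSpace.exp (s • MA2) (x, y) q *
            gen2 α a adj (fun z w => uu MA f t s z * uu MA f t s w) q.1 q.2 := by
    intro s
    calc ∑ q : V × V, (NormedSpace.exp (s • MA2) * MA2) (x, y) q *
          (uu MA f t s q.1 * uu MA f t s q.2)
        = ∑ q : V × V, ∑ k : V × V, NormedSpace.exp (s • MA2) (x, y) k * MA2 k q *
            (uu MA f t s q.1 * uu MA f t s q.2) := by
          simp [Matrix.mul_apply, Finset.sum_mul]
      _ = ∑ k : V × V, NormedSpace.exp (s • MA2) (x, y) k *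
            ∑ q : V × V, MA2 k q * (uu MA f t s q.1 * uu MA f t s q.2) := by
          rw [Finset.sum_comm]
          simp [Finset.mul_sum, mul_assoc]
      _ = ∑ k : V × V, NormedSpace.exp (s • MA2) (x, y) k *
            gen2 α a adj (fun z w => uu MA f t s z * uu MA f t s w) k.1 k.2 := by
          refine Finset.sum_congr rfl fun k _ => ?_
          rw [hMA2 (fun q => uu MA f t s q.1 * uu MA f t s q.2) k]
  -- the derivative is nonpositive on (0, t)
  have hF'le : ∀ s : ℝ, 0 ≤ s → FF' MA MA2 f t x y s ≤ 0 := by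
    intro s hs0
    unfold FF'
    rw [Finset.sum_add_distrib, hmulMA2 s, ← Finset.sum_add_distrib]
    refine Finset.sum_nonpos fun q _ => ?_
    rw [hduu s q.1, hduu s q.2, ← mul_add]
    have hfactor : gen2 α a adj (fun z w => uu MA f t s z * uu MA f t s w) q.1 q.2
        + (-sgen α a adj (fun k => uu MA f t s k) q.1 * uu MA f t s q.2
          + uu MA f t s q.1 * -sgen α a adj (fun k => uu MA f t s k) q.2) ≤ 0 := by
      rw [gen2_tensor adj hsym a α hα (fun k => uu MA f t s k) q.1 q.2]
      have hit : (0:ℝ) ≤ (if adj q.1 q.2 then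
          (α q.1 : ℝ) ^ (a - 1) * (α q.2 : ℝ) ^ (a - 1) *
            (uu MA f t s q.1 - uu MA f t s q.2) ^ 2 else 0) := by
        split
        · positivity
        · exact le_refl 0
      have hring : sgen α a adj (fun k => uu MA f t s k) q.1 * uu MA f t s q.2 +
            uu MA f t s q.1 * sgen α a adj (fun k => uu MA f t s k) q.2 -
            (if adj q.1 q.2 then
              (α q.1 : ℝ) ^ (a - 1) * (α q.2 : ℝ) ^ (a - 1) *
                (uu MA f t s q.1 - uu MA f t s q.2) ^ 2 else 0)
          + (-sgen α a adj (fun k => uu MA f t s k) q.1 * uu MA f t s q.2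
            + uu MA f t s q.1 * -sgen α a adj (fun k => uu MA f t s k) q.2)
          = -(if adj q.1 q.2 then
              (α q.1 : ℝ) ^ (a - 1) * (α q.2 : ℝ) ^ (a - 1) *
                (uu MA f t s q.1 - uu MA f t s q.2) ^ 2 else 0) := by ring
      rw [hring]
      exact neg_nonpos.mpr hit
    have hE2 : 0 ≤ NormedSpace.exp (s • MA2) (x, y) q :=
      exp_entry_nonneg MA2 hMA2offdiag hs0 (x, y) q
    exact le_trans (mul_le_mul_of_nonneg_left hfactor hE2) (by simp)
  -- F is antitone on [0, t]
  have hFanti : AntitoneOn (FF MA MA2 f t x y) (Set.Icc 0 t) := by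
    refine antitoneOn_of_deriv_nonpos (convex_Icc 0 t) ?_ ?_ ?_
    · exact fun s _ => (hasDerivAt_FF MA MA2 f t x y s).continuousAt.continuousWithinAt
    · exact fun s _ => (hasDerivAt_FF MA MA2 f t x y s).differentiableAt.differentiableWithinAt
    · intro s hs
      rw [(hasDerivAt_FF MA MA2 f t x y s).deriv]
      rw [interior_Icc] at hs
      exact hF'le s hs.1.le
  have hmain : FF MA MA2 f t x y t ≤ FF MA MA2 f t x y 0 :=
    hFanti (Set.left_mem_Icc.2 ht) (Set.right_mem_Icc.2 ht) ht
  -- endpoint identification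
  have huu_t : ∀ v : V, uu MA f t t v = f v := by
    intro v
    unfold uu
    rw [sub_self, zero_smul, NormedSpace.exp_zero]
    simp [Matrix.one_apply, ite_mul, zero_mul]
  have hFt : FF MA MA2 f t x y t
      = ∑ q : V × V, NormedSpace.exp (t • MA2) (x, y) q * (f q.1 * f q.2) := by
    unfold FF
    exact Finset.sum_congr rfl fun q _ => by rw [huu_t, huu_t]
  have hF0 : FF MA MA2 f t x y 0
      = (∑ u : V, NormedSpace.exp (t • MA) x u * f u) *
        (∑ u : V, NormedSpace.exp (t • MA) y u * f u) := by
    unfold FF uu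
    rw [zero_smul, NormedSpace.exp_zero, sub_zero]
    rw [show ∑ q : V × V, (1 : Matrix (V × V) (V × V) ℝ) (x, y) q *
        ((∑ w : V, NormedSpace.exp (t • MA) q.1 w * f w) *
          (∑ w : V, NormedSpace.exp (t • MA) q.2 w * f w))
      = (∑ w : V, NormedSpace.exp (t • MA) x w * f w) *
          (∑ w : V, NormedSpace.exp (t • MA) y w * f w) from by
      simp [Matrix.one_apply, ite_mul, zero_mul]]
  rw [← hFt, ← hF0]
  exact hmain
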